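/- For every positive integer n, the sum over k from 1 to n of q^{2n-2k} · (1-q^k)^2 · (1-q^{2k}) / ((1-q)^2 (1-q^2)) equals the square of the q-binomial coefficient [n+1 choose 2]_q. -/

import Mathlib

/-- The field of rational functions in q over ℚ. -/
noncomputable def q : RatFunc ℚ := RatFunc.X

lemma one_sub_q_pow_ne_zero {m : ℕ} (hm : 0 < m) : (1 : RatFunc ℚ) - q ^ m ≠ 0 := by
  intro h
  have h1 : (q : RatFunc ℚ) ^ m = 1 := by linear_combination -h
  have : algebraMap (Polynomial ℚ) (RatFunc ℚ) (Polynomial.X ^ m)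
      = algebraMap (Polynomial ℚ) (RatFunc ℚ) 1 := by
    simpa [q, map_pow, RatFunc.algebraMap_X] using h1
  have hX : (Polynomial.X : Polynomial ℚ) ^ m = 1 :=
    RatFunc.algebraMap_injective ℚ this
  have := congrArg Polynomial.natDegree hX
  simp [Polynomial.natDegree_X_pow] at this
  omega

theorem warnaar_q_analogue (n : ℕ) (hn : 0 < n) :
    (∑ k ∈ Finset.Icc 1 n,
        q ^ (2 * n - 2 * k) * (1 - q ^ k) ^ 2 * (1 - q ^ (2 * k)) /
          ((1 - q) ^ 2 * (1 - q ^ 2)))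
      = ((1 - q ^ (n + 1)) * (1 - q ^ n) / ((1 - q) * (1 - q ^ 2))) ^ 2 := by
  have h1 : (1 : RatFunc ℚ) - q ≠ 0 := by simpa using one_sub_q_pow_ne_zero one_pos
  have h2 : (1 : RatFunc ℚ) - q ^ 2 ≠ 0 := one_sub_q_pow_ne_zero two_pos
  induction n, hn using Nat.le_induction with
  | base =>
      simp only [Finset.Icc_self, Finset.sum_singleton]
      field_simp
      ring
  | succ n hn ih =>
      rw [Finset.sum_Icc_succ_top (by omega : 1 ≤ n + 1)]
      have hrw : ∀ k ∈ Finset.Icc 1 n,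
          q ^ (2 * (n + 1) - 2 * k) * (1 - q ^ k) ^ 2 * (1 - q ^ (2 * k)) /
            ((1 - q) ^ 2 * (1 - q ^ 2))
          = q ^ 2 * (q ^ (2 * n - 2 * k) * (1 - q ^ k) ^ 2 * (1 - q ^ (2 * k)) /
            ((1 - q) ^ 2 * (1 - q ^ 2))) := by
        intro k hk
        simp only [Finset.mem_Icc] at hk
        have : 2 * (n + 1) - 2 * k = (2 * n - 2 * k) + 2 := by omega
        rw [this, pow_add]
        ring
      rw [Finset.sum_congr rfl hrw, ← Finset.mul_sum, ih]
      have h3 : (2 * (n + 1) - 2 * (n + 1)) = 0 := by omega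
      rw [h3]
      field_simp
      ring
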